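/- As formal power series, ∑_{k≥0} t^{k(k+1)} = ∏_{k≥1} (1+t^{2k})(1-t^{4k}). -/

import Mathlib

open PowerSeries Finset
namespace JacobiAux

noncomputable def Pp (m : ℕ) : PowerSeries ℤ := ∏ k ∈ range m, (1 - X ^ (2 * (k + 1)))

noncomputable def B : ℕ → ℕ → PowerSeries ℤ
  | 0, 0 => 1
  | 0, _ + 1 => 0
  | m + 1, 0 => B m 0
  | m + 1, s + 1 => B m s + X ^ (2 * (s + 1)) * B m (s + 1)

lemma B_zero (m : ℕ) : B m 0 = 1 := by
  induction m with
  | zero => rfl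
  | succ m ih => rw [B, ih]

lemma B_eq_zero : ∀ m s, m < s → B m s = 0
  | 0, s + 1, _ => rfl
  | m + 1, s + 1, h => by
    rw [B, B_eq_zero m s (by omega), B_eq_zero m (s+1) (by omega), mul_zero, add_zero]

lemma Pp_succ (m : ℕ) : Pp (m + 1) = Pp m * (1 - X ^ (2 * (m + 1))) := by
  rw [Pp, prod_range_succ]; rfl

lemma constantCoeff_Pp (m : ℕ) : constantCoeff (Pp m) = 1 := by
  rw [Pp, map_prod]
  refine Finset.prod_eq_one fun k _ => ?_
  simp

lemma isUnit_Pp (m : ℕ) : IsUnit (Pp m) := by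
  rw [PowerSeries.isUnit_iff_constantCoeff, constantCoeff_Pp]
  exact isUnit_one

lemma Pp_ne_zero (m : ℕ) : Pp m ≠ 0 := by
  intro h
  have h2 := constantCoeff_Pp m
  rw [h, map_zero] at h2
  exact one_ne_zero h2.symm


lemma Bprod : ∀ m s, s ≤ m → B m s * (Pp s * Pp (m - s)) = Pp m
  | 0, 0, _ => by simp [B, Pp]
  | m + 1, 0, _ => by
    rw [B_zero, one_mul, Nat.sub_zero, Pp, prod_range_zero, one_mul]
  | m + 1, s + 1, h => by
    have hs : s ≤ m := by omega
    rw [B]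
    have h1 : B m s * (Pp (s+1) * Pp (m+1 - (s+1))) = (1 - X ^ (2*(s+1))) * Pp m := by
      have : m + 1 - (s + 1) = m - s := by omega
      rw [this, Pp_succ]
      calc B m s * (Pp s * (1 - X ^ (2*(s+1))) * Pp (m - s))
          = (B m s * (Pp s * Pp (m - s))) * (1 - X ^ (2*(s+1))) := by ring
        _ = (1 - X ^ (2*(s+1))) * Pp m := by rw [Bprod m s hs]; ring
    have h2 : X ^ (2*(s+1)) * B m (s+1) * (Pp (s+1) * Pp (m+1 - (s+1))) =
        X ^ (2*(s+1)) * (1 - X ^ (2*(m-s))) * Pp m := by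
      rcases Nat.lt_or_ge s m with hlt | hge
      · have hP : Pp (m + 1 - (s+1)) = Pp (m - (s+1)) * (1 - X ^ (2*(m-s))) := by
          rw [show m + 1 - (s+1) = (m - (s+1)) + 1 by omega, Pp_succ,
            show m - (s+1) + 1 = m - s by omega]
        rw [hP]
        calc X ^ (2*(s+1)) * B m (s+1) * (Pp (s+1) * (Pp (m - (s+1)) * (1 - X ^ (2*(m-s)))))
            = X ^ (2*(s+1)) * (1 - X ^ (2*(m-s))) * (B m (s+1) * (Pp (s+1) * Pp (m - (s+1)))) := by
              ring
          _ = X ^ (2*(s+1)) * (1 - X ^ (2*(m-s))) * Pp m := by rw [Bprod m (s+1) hlt]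
      · have hsm : s = m := le_antisymm hs hge
        rw [hsm, B_eq_zero m (m+1) (by omega)]
        simp
    rw [add_mul, h1, h2, Pp_succ]
    have hx : (X : PowerSeries ℤ) ^ (2*(s+1)) * X ^ (2*(m-s)) = X ^ (2*(m+1)) := by
      rw [← pow_add]; congr 1; omega
    calc (1 - X ^ (2*(s+1))) * Pp m + X ^ (2*(s+1)) * (1 - X ^ (2*(m-s))) * Pp m
        = Pp m * 1 - (X ^ (2*(s+1)) * X ^ (2*(m-s))) * Pp m := by ring
      _ = Pp m * (1 - X ^ (2*(m+1))) := by rw [hx]; ring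

lemma B_diag (m : ℕ) : B m m = 1 := by
  have h := Bprod m m le_rfl
  rw [Nat.sub_self] at h
  have : Pp 0 = 1 := by simp [Pp]
  rw [this, mul_one, mul_comm] at h
  exact mul_left_cancel₀ (Pp_ne_zero m) (by rw [h, mul_one])

/-- Pascal variant B -/
lemma PB (m s : ℕ) (hs : s ≤ m) :
    B (m+1) (s+1) = X ^ (2*(m-s)) * B m s + B m (s+1) := by
  apply mul_right_cancel₀ (b := Pp (s+1) * Pp (m - s))
    (mul_ne_zero (Pp_ne_zero _) (Pp_ne_zero _))
  have hl : B (m+1) (s+1) * (Pp (s+1) * Pp (m - s)) = Pp (m+1) := by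
    have : m - s = m + 1 - (s+1) := by omega
    rw [this]; exact Bprod (m+1) (s+1) (by omega)
  rw [hl, add_mul]
  have h1 : X ^ (2*(m-s)) * B m s * (Pp (s+1) * Pp (m - s)) =
      X ^ (2*(m-s)) * (1 - X ^ (2*(s+1))) * Pp m := by
    rw [Pp_succ]
    calc X ^ (2*(m-s)) * B m s * (Pp s * (1 - X ^ (2*(s+1))) * Pp (m - s))
        = X ^ (2*(m-s)) * (1 - X ^ (2*(s+1))) * (B m s * (Pp s * Pp (m - s))) := by ring
      _ = _ := by rw [Bprod m s hs]
  have h2 : B m (s+1) * (Pp (s+1) * Pp (m - s)) = (1 - X ^ (2*(m-s))) * Pp m := by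
    rcases Nat.lt_or_ge s m with hlt | hge
    · have hP : Pp (m - s) = Pp (m - (s+1)) * (1 - X ^ (2*(m-s))) := by
        rw [show m - s = (m - (s+1)) + 1 by omega, Pp_succ,
          show m - (s+1) + 1 = m - s by omega]
      rw [hP]
      calc B m (s+1) * (Pp (s+1) * (Pp (m - (s+1)) * (1 - X ^ (2*(m-s)))))
          = (1 - X ^ (2*(m-s))) * (B m (s+1) * (Pp (s+1) * Pp (m - (s+1)))) := by ring
        _ = _ := by rw [Bprod m (s+1) hlt]
    · have hsm : s = m := le_antisymm hs hge
      rw [hsm, B_eq_zero m (m+1) (by omega), Nat.sub_self]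
      simp
  rw [h1, h2, Pp_succ]
  have hx : (X : PowerSeries ℤ) ^ (2*(m-s)) * X ^ (2*(s+1)) = X ^ (2*(m+1)) := by
    rw [← pow_add]; congr 1; omega
  symm
  calc X ^ (2*(m-s)) * (1 - X ^ (2*(s+1))) * Pp m + (1 - X ^ (2*(m-s))) * Pp m
      = Pp m * 1 - (X ^ (2*(m-s)) * X ^ (2*(s+1))) * Pp m := by ring
    _ = Pp m * (1 - X ^ (2*(m+1))) := by rw [hx]; ring

/-- exponent `(i-n)*(i-n+1)` for `j = i - n ∈ ℤ`, as a natural number -/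
def e (n i : ℕ) : ℕ := i*i + i + n*n - (2*i*n + n)

lemma e_ok (n i : ℕ) : 2*i*n + n ≤ i*i + i + n*n := by
  rcases Nat.le_total i n with h | h
  · obtain ⟨d, rfl⟩ := Nat.exists_eq_add_of_le h
    have hd : d ≤ d*d := by
      cases d with
      | zero => simp
      | succ d => nlinarith
    nlinarith
  · obtain ⟨d, rfl⟩ := Nat.exists_eq_add_of_le h
    nlinarith

lemma e_succ_succ (n i : ℕ) : e (n+1) (i+1) = e n i := by
  have h1 := e_ok n i
  have h2 := e_ok (n+1) (i+1)
  unfold e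
  zify [h1, h2]
  ring

lemma E1 (n i : ℕ) (h : i ≤ 2*n) : 2*(2*n-i) + e n (i+1) = e n i + (2*n+2) := by
  have h1 := e_ok n i
  have h2 := e_ok n (i+1)
  unfold e
  zify [h1, h2, h]
  ring

lemma E2 (n i : ℕ) : e n i + 2*(i+1) = e n (i+1) + 2*n := by
  have h1 := e_ok n i
  have h2 := e_ok n (i+1)
  unfold e
  zify [h1, h2]
  ring

lemma e_n_zero (n : ℕ) : e n 0 = n*n - n := by unfold e; omega

lemma e_succ_zero (n : ℕ) : e (n+1) 0 = e n 0 + 2*n := by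
  have h1 := e_ok n 0
  have h2 := e_ok (n+1) 0
  unfold e at *
  zify [h1, h2]
  ring

lemma e_top (n : ℕ) : e (n+1) (2*n+2) = e n (2*n) + (2*n+2) := by
  have h1 := e_ok n (2*n)
  have h2 := e_ok (n+1) (2*n+2)
  unfold e at *
  zify [h1, h2]
  ring

lemma e_shift (n i : ℕ) : e n (n + i) = i * (i+1) := by
  have h := e_ok n (n+i)
  unfold e at *
  zify [h]
  ring

/-- Pascal squared : key recursion for the JTP induction -/
lemma PascalSq (n i : ℕ) (h : i ≤ 2*n) :
    B (2*n+2) (i+2) = X ^ (2*(2*n-i)) * B (2*n) i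
      + (1 + X ^ (2*(2*n+1))) * B (2*n) (i+1) + X ^ (2*(i+2)) * B (2*n) (i+2) := by
  have hA : B (2*n+2) (i+2) = B (2*n+1) (i+1) + X ^ (2*(i+2)) * B (2*n+1) (i+2) := rfl
  have hB1 : B (2*n+1) (i+1) = X ^ (2*(2*n-i)) * B (2*n) i + B (2*n) (i+1) :=
    PB (2*n) i h
  rcases Nat.lt_or_ge i (2*n) with hlt | hge
  · have hB2 : B (2*n+1) (i+2) = X ^ (2*(2*n-(i+1))) * B (2*n) (i+1) + B (2*n) (i+2) :=
      PB (2*n) (i+1) (by omega)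
    rw [hA, hB1, hB2]
    have hx : (X : PowerSeries ℤ) ^ (2*(i+2)) * X ^ (2*(2*n-(i+1))) = X ^ (2*(2*n+1)) := by
      rw [← pow_add]; congr 1; omega
    calc X ^ (2*(2*n-i)) * B (2*n) i + B (2*n) (i+1)
          + X ^ (2*(i+2)) * (X ^ (2*(2*n-(i+1))) * B (2*n) (i+1) + B (2*n) (i+2))
        = X ^ (2*(2*n-i)) * B (2*n) i + B (2*n) (i+1)
          + (X ^ (2*(i+2)) * X ^ (2*(2*n-(i+1)))) * B (2*n) (i+1)
          + X ^ (2*(i+2)) * B (2*n) (i+2) := by ring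
      _ = _ := by rw [hx]; ring
  · have hie : i = 2*n := by omega
    subst hie
    rw [hA, hB1, B_eq_zero (2*n+1) (2*n+2) (by omega),
      B_eq_zero (2*n) (2*n+1) (by omega), B_eq_zero (2*n) (2*n+2) (by omega)]
    ring

lemma PascalOne (n : ℕ) :
    B (2*n+2) 1 = (1 + X ^ (2*(2*n+1))) * B (2*n) 0 + X ^ (2*1) * B (2*n) 1 := by
  have hA : B (2*n+2) 1 = B (2*n+1) 0 + X ^ (2*1) * B (2*n+1) 1 := rfl
  have hB1 : B (2*n+1) 1 = X ^ (2*(2*n-0)) * B (2*n) 0 + B (2*n) 1 := PB (2*n) 0 (by omega)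
  rw [hA, hB1, B_zero, B_zero]
  have hx : (X : PowerSeries ℤ) ^ (2*1) * X ^ (2*(2*n-0)) = X ^ (2*(2*n+1)) := by
    rw [← pow_add]; congr 1; omega
  calc (1 : PowerSeries ℤ) + X ^ (2*1) * (X ^ (2*(2*n-0)) * 1 + B (2*n) 1)
      = 1 + (X ^ (2*1) * X ^ (2*(2*n-0))) * 1 + X ^ (2*1) * B (2*n) 1 := by ring
    _ = _ := by rw [hx]; ring

lemma jtp_step (n : ℕ) :
    ∑ i ∈ range (2*n+3), B (2*n+2) i * X ^ (e (n+1) i)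
      = (∑ i ∈ range (2*n+1), B (2*n) i * X ^ (e n i))
          * ((1 + X ^ (2*n+2)) * (1 + X ^ (2*n))) := by
  have h42 : 2*(2*n+1) = 4*n+2 := by ring
  -- normalize each middle summand via PascalSq
  have key : ∀ i ∈ range (2*n),
      B (2*n+2) (i+2) * X ^ (e n (i+1)) =
        B (2*n) i * X ^ (e n i) * X ^ (2*n+2)
        + B (2*n) (i+1) * X ^ (e n (i+1))
        + B (2*n) (i+1) * X ^ (e n (i+1)) * X ^ (4*n+2)
        + B (2*n) (i+2) * X ^ (e n (i+2)) * X ^ (2*n) := by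
    intro i hi
    rw [mem_range] at hi
    rw [PascalSq n i (by omega), h42]
    have hx1 : (X : PowerSeries ℤ) ^ (2*(2*n-i)) * X ^ (e n (i+1))
        = X ^ (e n i) * X ^ (2*n+2) := by
      rw [← pow_add, ← pow_add]
      congr 1
      have := E1 n i (by omega); omega
    have hx2 : (X : PowerSeries ℤ) ^ (2*(i+2)) * X ^ (e n (i+1))
        = X ^ (e n (i+2)) * X ^ (2*n) := by
      rw [← pow_add, ← pow_add]
      congr 1
      have h : e n (i+1) + 2*(i+2) = e n (i+2) + 2*n := E2 n (i+1)
      omega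
    calc (X ^ (2*(2*n-i)) * B (2*n) i + (1 + X ^ (4*n+2)) * B (2*n) (i+1)
            + X ^ (2*(i+2)) * B (2*n) (i+2)) * X ^ (e n (i+1))
        = B (2*n) i * (X ^ (2*(2*n-i)) * X ^ (e n (i+1)))
          + B (2*n) (i+1) * X ^ (e n (i+1))
          + B (2*n) (i+1) * X ^ (e n (i+1)) * X ^ (4*n+2)
          + B (2*n) (i+2) * (X ^ (2*(i+2)) * X ^ (e n (i+1))) := by ring
      _ = _ := by rw [hx1, hx2]; ring
  -- decompose the LHS
  have lhs1 : ∑ i ∈ range (2*n+3), B (2*n+2) i * X ^ (e (n+1) i)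
      = (∑ i ∈ range (2*n+1), B (2*n+2) (i+1) * X ^ (e n i))
        + X ^ (e (n+1) 0) + X ^ (e (n+1) (2*n+2)) := by
    rw [show 2*n+3 = (2*n+2)+1 by ring, sum_range_succ, sum_range_succ']
    rw [B_zero, show 2*n+2 = 2*(n+1) by ring, B_diag]
    have : ∀ i, e (n+1) (i+1) = e n i := e_succ_succ n
    rw [show (2*(n+1)) = 2*n+2 by ring]
    simp only [this, one_mul]
  rw [lhs1]
  have lhs2 : ∑ i ∈ range (2*n+1), B (2*n+2) (i+1) * X ^ (e n i)
      = (∑ i ∈ range (2*n), B (2*n+2) (i+2) * X ^ (e n (i+1)))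
        + B (2*n+2) 1 * X ^ (e n 0) := by
    rw [sum_range_succ']
  rw [lhs2, sum_congr rfl key]
  -- split the sum of four terms
  rw [show (∑ i ∈ range (2*n),
      (B (2*n) i * X ^ (e n i) * X ^ (2*n+2)
        + B (2*n) (i+1) * X ^ (e n (i+1))
        + B (2*n) (i+1) * X ^ (e n (i+1)) * X ^ (4*n+2)
        + B (2*n) (i+2) * X ^ (e n (i+2)) * X ^ (2*n)))
      = (∑ i ∈ range (2*n), B (2*n) i * X ^ (e n i)) * X ^ (2*n+2)
        + (∑ i ∈ range (2*n), B (2*n) (i+1) * X ^ (e n (i+1)))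
        + (∑ i ∈ range (2*n), B (2*n) (i+1) * X ^ (e n (i+1))) * X ^ (4*n+2)
        + (∑ i ∈ range (2*n), B (2*n) (i+2) * X ^ (e n (i+2))) * X ^ (2*n) by
    simp only [sum_add_distrib, sum_mul]]
  -- PascalOne expansion
  have pone : B (2*n+2) 1 * X ^ (e n 0)
      = X ^ (e n 0) + X ^ (e n 0) * X ^ (4*n+2)
        + B (2*n) 1 * X ^ (e n 1) * X ^ (2*n) := by
    rw [PascalOne n, B_zero, h42]
    have hx : (X : PowerSeries ℤ) ^ (2*1) * X ^ (e n 0) = X ^ (e n 1) * X ^ (2*n) := by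
      rw [← pow_add, ← pow_add]
      congr 1
      have h : e n 0 + 2*1 = e n 1 + 2*n := E2 n 0
      omega
    calc ((1 + X ^ (4*n+2)) * 1 + X ^ (2*1) * B (2*n) 1) * X ^ (e n 0)
        = X ^ (e n 0) + X ^ (e n 0) * X ^ (4*n+2)
          + B (2*n) 1 * (X ^ (2*1) * X ^ (e n 0)) := by ring
      _ = _ := by rw [hx]; ring
  rw [pone]
  -- boundary exponent rewrites
  have hb0 : (X : PowerSeries ℤ) ^ (e (n+1) 0) = X ^ (e n 0) * X ^ (2*n) := by
    rw [← pow_add, e_succ_zero]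
  have hbtop : (X : PowerSeries ℤ) ^ (e (n+1) (2*n+2)) = X ^ (e n (2*n)) * X ^ (2*n+2) := by
    rw [← pow_add, e_top]
  rw [hb0, hbtop]
  -- atom relations
  have h1 : ∑ i ∈ range (2*n+1), B (2*n) i * X ^ (e n i)
      = (∑ i ∈ range (2*n), B (2*n) (i+1) * X ^ (e n (i+1))) + B (2*n) 0 * X ^ (e n 0) := by
    rw [sum_range_succ']
  have h2 : ∑ i ∈ range (2*n+1), B (2*n) i * X ^ (e n i)
      = (∑ i ∈ range (2*n), B (2*n) i * X ^ (e n i)) + B (2*n) (2*n) * X ^ (e n (2*n)) := by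
    rw [sum_range_succ]
  have h3 : ∑ i ∈ range (2*n+1), B (2*n) i * X ^ (e n i)
      = (∑ i ∈ range (2*n), B (2*n) (i+2) * X ^ (e n (i+2)))
        + B (2*n) 1 * X ^ (e n 1) + B (2*n) 0 * X ^ (e n 0) := by
    have hz1 : B (2*n) (2*n+1) = 0 := B_eq_zero _ _ (by omega)
    have hz2 : B (2*n) (2*n+2) = 0 := B_eq_zero _ _ (by omega)
    have : ∑ i ∈ range (2*n+3), B (2*n) i * X ^ (e n i)
        = ∑ i ∈ range (2*n+1), B (2*n) i * X ^ (e n i) := by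
      rw [show 2*n+3 = (2*n+2)+1 by ring, sum_range_succ, sum_range_succ, hz1, hz2]
      ring
    rw [← this, show 2*n+3 = (2*n+2)+1 by ring, sum_range_succ', sum_range_succ',
      sum_range_succ, B_eq_zero (2*n) (2*n+1+1) (by omega)]
    ring
  have hx : (X : PowerSeries ℤ) ^ (2*n+2) * X ^ (2*n) = X ^ (4*n+2) := by
    rw [← pow_add]; congr 1; ring
  rw [B_zero] at h1 h3
  rw [B_diag] at h2
  linear_combination (-1 : PowerSeries ℤ) *
    (h1 * (1 + (X : PowerSeries ℤ) ^ (4*n+2))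
      + h2 * (X : PowerSeries ℤ) ^ (2*n+2) + h3 * (X : PowerSeries ℤ) ^ (2*n)
      + hx * (∑ i ∈ range (2*n+1), B (2*n) i * X ^ (e n i)))

lemma jtp (n : ℕ) :
    ∏ k ∈ range n, ((1 + X ^ (2*(k+1))) * (1 + X ^ (2*k)))
      = ∑ i ∈ range (2*n+1), B (2*n) i * X ^ (e n i) := by
  induction n with
  | zero => simp [B, e]
  | succ n ih =>
    rw [prod_range_succ, ih, show 2*(n+1) = 2*n+2 by ring,
      show 2*n+2+1 = 2*n+3 by ring, jtp_step n]

lemma prod_one_sub_dvd (s : Finset ℕ) (d : ℕ → ℕ) (c : ℕ) (h : ∀ k ∈ s, c ≤ d k) :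
    (X : PowerSeries ℤ) ^ c ∣ (∏ k ∈ s, (1 - (X : PowerSeries ℤ) ^ (d k))) - 1 := by
  induction s using Finset.cons_induction with
  | empty => simp
  | cons a s ha ih =>
    rw [prod_cons]
    have h1 : (X : PowerSeries ℤ) ^ c ∣ (∏ k ∈ s, (1 - (X : PowerSeries ℤ) ^ (d k))) - 1 :=
      ih fun k hk => h k (mem_cons_of_mem hk)
    have h2 : (X : PowerSeries ℤ) ^ c ∣ X ^ (d a) :=
      pow_dvd_pow X (h a (mem_cons_self a s))
    have : (1 - (X : PowerSeries ℤ) ^ (d a)) * (∏ k ∈ s, (1 - (X : PowerSeries ℤ) ^ (d k))) - 1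
        = ((∏ k ∈ s, (1 - (X : PowerSeries ℤ) ^ (d k))) - 1)
          - (X : PowerSeries ℤ) ^ (d a) * (∏ k ∈ s, (1 - (X : PowerSeries ℤ) ^ (d k))) := by
      ring
    rw [this]
    exact dvd_sub h1 (Dvd.dvd.mul_right h2 _)

lemma Pdiff (a m : ℕ) (h : a ≤ m) : (X : PowerSeries ℤ) ^ (2*a+2) ∣ Pp m - Pp a := by
  have hm : Pp m = Pp a * ∏ k ∈ range (m - a), (1 - (X : PowerSeries ℤ) ^ (2*(a + k + 1))) := by
    conv_lhs => rw [show m = a + (m - a) by omega]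
    rw [Pp, Pp, prod_range_add]
  rw [hm, show Pp a * (∏ k ∈ range (m - a), (1 - (X : PowerSeries ℤ) ^ (2*(a + k + 1)))) - Pp a
      = Pp a * ((∏ k ∈ range (m - a), (1 - (X : PowerSeries ℤ) ^ (2*(a + k + 1)))) - 1) by ring]
  exact Dvd.dvd.mul_left
    (prod_one_sub_dvd _ _ _ (fun k _ => by omega)) _

lemma BppN (N i : ℕ) (hi : i ≤ 2*N) :
    (X : PowerSeries ℤ) ^ (2 * min i (2*N - i) + 2) ∣ B (2*N) i * Pp N - 1 := by
  set a := min i (2*N - i) with ha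
  have key : (B (2*N) i * Pp N - 1) * (Pp i * Pp (2*N - i))
      = Pp N * Pp (2*N) - Pp i * Pp (2*N - i) := by
    have hb := Bprod (2*N) i hi
    calc (B (2*N) i * Pp N - 1) * (Pp i * Pp (2*N - i))
        = (B (2*N) i * (Pp i * Pp (2*N - i))) * Pp N - Pp i * Pp (2*N - i) := by ring
      _ = _ := by rw [hb]; ring
  have hdvd : (X : PowerSeries ℤ) ^ (2*a+2) ∣ Pp N * Pp (2*N) - Pp i * Pp (2*N - i) := by
    have e1 : Pp N * Pp (2*N) - Pp i * Pp (2*N - i)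
        = (Pp N - Pp a) * Pp (2*N) + Pp a * (Pp (2*N) - Pp a)
          - (Pp i - Pp a) * Pp (2*N - i) - Pp a * (Pp (2*N - i) - Pp a) := by ring
    rw [e1]
    have d1 := Pdiff a N (by omega)
    have d2 := Pdiff a (2*N) (by omega)
    have d3 := Pdiff a i (by omega)
    have d4 := Pdiff a (2*N - i) (by omega)
    exact dvd_sub (dvd_sub (dvd_add (d1.mul_right _) (d2.mul_left _)) (d3.mul_right _))
      (d4.mul_left _)
  have hu : IsUnit (Pp i * Pp (2*N - i)) := (isUnit_Pp i).mul (isUnit_Pp (2*N - i))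
  obtain ⟨v, hv⟩ := hu.exists_right_inv
  have : B (2*N) i * Pp N - 1
      = ((B (2*N) i * Pp N - 1) * (Pp i * Pp (2*N - i))) * v := by
    rw [mul_assoc, hv, mul_one]
  rw [this, key]
  exact hdvd.mul_right v

lemma emin (N i : ℕ) (hN : 1 ≤ N) (hi : i ≤ 2*N) :
    N ≤ e N i + (2 * min i (2*N - i) + 2) := by
  rcases Nat.le_total i N with h | h
  · rw [min_eq_left (by omega)]
    have hok := e_ok N i
    unfold e
    zify [hok]
    nlinarith [sq_nonneg ((N:ℤ) - i - 1)]
  · rw [min_eq_right (by omega)]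
    have hok := e_ok N i
    unfold e
    zify [hok, hi]
    nlinarith [sq_nonneg ((i:ℤ) - N - 1)]

lemma e_nn (n : ℕ) : e n n = 0 := by
  have := e_ok n n
  unfold e at *
  zify [this]
  ring

lemma e_down (n d : ℕ) (h : d ≤ n) : e n (n - d) = d * (d - 1) := by
  rcases Nat.eq_zero_or_pos d with rfl | hd
  · simpa using e_nn n
  · obtain ⟨i, rfl⟩ : ∃ i, n = i + d := ⟨n - d, by omega⟩
    rw [show i + d - d = i by omega]
    unfold e
    have hok := e_ok (i+d) i
    zify [hok, hd]
    ring

lemma two_prod_eq (n : ℕ) :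
    2 * ∏ k ∈ range (n+1), ((1 + (X : PowerSeries ℤ) ^ (2*(k+1))) * (1 - X ^ (4*(k+1))))
      = (1 + X ^ (2*(n+1)))
        * (∑ i ∈ range (2*(n+1)+1), B (2*(n+1)) i * X ^ (e (n+1) i)) * Pp (n+1) := by
  have hsplit : ∏ k ∈ range (n+1), ((1 + (X : PowerSeries ℤ) ^ (2*(k+1))) * (1 - X ^ (4*(k+1))))
      = (∏ k ∈ range (n+1), (1 + (X : PowerSeries ℤ) ^ (2*(k+1))))
        * (∏ k ∈ range (n+1), (1 + (X : PowerSeries ℤ) ^ (2*(k+1)))) * Pp (n+1) := by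
    have hcong : ∀ k ∈ range (n+1),
        (1 + (X : PowerSeries ℤ) ^ (2*(k+1))) * (1 - X ^ (4*(k+1)))
          = ((1 + (X : PowerSeries ℤ) ^ (2*(k+1))) * (1 + X ^ (2*(k+1)))) * (1 - X ^ (2*(k+1))) := by
      intro k _
      have hxx : (X : PowerSeries ℤ) ^ (4*(k+1)) = X ^ (2*(k+1)) * X ^ (2*(k+1)) := by
        rw [← pow_add]; congr 1; ring
      rw [hxx]; ring
    rw [prod_congr rfl hcong, prod_mul_distrib, prod_mul_distrib, Pp]
  have hJ : (∏ k ∈ range (n+1), (1 + (X : PowerSeries ℤ) ^ (2*(k+1))))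
      * (∏ k ∈ range (n+1), (1 + (X : PowerSeries ℤ) ^ (2*k)))
      = ∑ i ∈ range (2*(n+1)+1), B (2*(n+1)) i * X ^ (e (n+1) i) := by
    rw [← prod_mul_distrib]
    exact jtp (n+1)
  have h2A : (∏ k ∈ range (n+1), (1 + (X : PowerSeries ℤ) ^ (2*k))) * (1 + X ^ (2*(n+1)))
      = 2 * ∏ k ∈ range (n+1), (1 + (X : PowerSeries ℤ) ^ (2*(k+1))) := by
    rw [prod_range_succ', prod_range_succ]
    norm_num
    ring
  rw [hsplit, ← hJ]
  linear_combination (-(∏ k ∈ range (n+1), (1 + (X : PowerSeries ℤ) ^ (2*(k+1)))) * Pp (n+1)) * h2A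

theorem main_aux (n : ℕ) :
    PowerSeries.coeff n (∑ k ∈ Finset.range (n + 1), (PowerSeries.X : PowerSeries ℤ) ^ (k * (k + 1))) =
    PowerSeries.coeff n (∏ k ∈ Finset.range (n + 1),
      (1 + (PowerSeries.X : PowerSeries ℤ) ^ (2 * (k + 1))) * (1 - (PowerSeries.X : PowerSeries ℤ) ^ (4 * (k + 1)))) := by
  set St : PowerSeries ℤ := ∑ k ∈ Finset.range (n + 1), (X : PowerSeries ℤ) ^ (k * (k + 1)) with hSt
  set Pr : PowerSeries ℤ := ∏ k ∈ Finset.range (n + 1),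
    (1 + (X : PowerSeries ℤ) ^ (2 * (k + 1))) * (1 - (X : PowerSeries ℤ) ^ (4 * (k + 1))) with hPr
  set S' : PowerSeries ℤ := ∑ i ∈ range (2*(n+1)+1), B (2*(n+1)) i * X ^ (e (n+1) i) with hS'
  set S2 : PowerSeries ℤ := ∑ i ∈ range (2*(n+1)+1), (X : PowerSeries ℤ) ^ (e (n+1) i) with hS2
  have h2 : 2 * Pr = (1 + X ^ (2*(n+1))) * S' * Pp (n+1) := two_prod_eq n
  -- d2 : middle correction
  have hterm : ∀ i ∈ range (2*(n+1)+1),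
      (X : PowerSeries ℤ) ^ (n+1) ∣ (B (2*(n+1)) i * Pp (n+1) - 1) * X ^ (e (n+1) i) := by
    intro i hi
    rw [mem_range] at hi
    have hb := BppN (n+1) i (by omega)
    have hle := emin (n+1) i (by omega) (by omega)
    have hmul : (X : PowerSeries ℤ) ^ (2 * min i (2*(n+1) - i) + 2) * X ^ (e (n+1) i)
        ∣ (B (2*(n+1)) i * Pp (n+1) - 1) * X ^ (e (n+1) i) :=
      mul_dvd_mul hb dvd_rfl
    refine dvd_trans ?_ hmul
    rw [← pow_add]
    exact pow_dvd_pow X (by omega)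
  have d2 : (X : PowerSeries ℤ) ^ (n+1) ∣ S' * Pp (n+1) - S2 := by
    have hrw : S' * Pp (n+1) - S2
        = ∑ i ∈ range (2*(n+1)+1), (B (2*(n+1)) i * Pp (n+1) - 1) * X ^ (e (n+1) i) := by
      rw [hS', hS2, sum_mul, ← sum_sub_distrib]
      apply sum_congr rfl
      intro i _
      ring
    rw [hrw]
    exact dvd_sum hterm
  -- d3 : the exact tail
  have hpart1 : ∑ i ∈ range (n+1), (X : PowerSeries ℤ) ^ (e (n+1) i) = St := by
    rw [hSt, ← sum_range_reflect]
    apply sum_congr rfl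
    intro j hj
    rw [mem_range] at hj
    congr 1
    rw [show (n+1) - 1 - j = (n+1) - (j+1) by omega, e_down (n+1) (j+1) (by omega),
      Nat.add_sub_cancel]
    ring
  have hpart2 : ∑ i ∈ range (n+2), (X : PowerSeries ℤ) ^ (e (n+1) ((n+1)+i))
      = St + X ^ ((n+1)*(n+2)) := by
    rw [sum_range_succ]
    congr 1
    · rw [hSt]
      apply sum_congr rfl
      intro i _
      rw [e_shift]
    · rw [e_shift]
  have hd3 : S2 - 2 * St = X ^ ((n+1)*(n+2)) := by
    rw [hS2, show 2*(n+1)+1 = (n+1)+(n+2) by omega, sum_range_add]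
    rw [hpart1]  -- first part
    rw [hpart2]
    ring
  have d3 : (X : PowerSeries ℤ) ^ (n+1) ∣ S2 - 2 * St := by
    rw [hd3]
    exact pow_dvd_pow X (Nat.le_mul_of_pos_right _ (by omega))
  have d1 : (X : PowerSeries ℤ) ^ (n+1) ∣ X ^ (2*(n+1)) * (S' * Pp (n+1)) :=
    Dvd.dvd.mul_right (pow_dvd_pow X (by omega)) _
  have hdvd : (X : PowerSeries ℤ) ^ (n+1) ∣ 2 * Pr - 2 * St := by
    have hass : 2 * Pr - 2 * St
        = X ^ (2*(n+1)) * (S' * Pp (n+1)) + (S' * Pp (n+1) - S2) + (S2 - 2 * St) := by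
      rw [h2]; ring
    rw [hass]
    exact dvd_add (dvd_add d1 d2) d3
  have hc : (coeff n) (2 * Pr - 2 * St) = 0 :=
    (PowerSeries.X_pow_dvd_iff.mp hdvd) n (by omega)
  rw [map_sub] at hc
  have h2f : ∀ f : PowerSeries ℤ, (coeff n) (2 * f) = 2 * (coeff n) f := by
    intro f
    rw [show (2 : PowerSeries ℤ) * f = f + f from two_mul f, map_add]
    ring
  rw [h2f, h2f] at hc
  omega
end JacobiAux

/-- As formal power series over `ℤ`, `∑_{k≥0} t^{k(k+1)} = ∏_{k≥1} (1+t^{2k})(1-t^{4k})`,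
stated coefficientwise via stabilized truncations. -/
theorem jacobi_squared_identity :
    ∀ n : ℕ,
      PowerSeries.coeff n (∑ k ∈ Finset.range (n + 1), (PowerSeries.X : PowerSeries ℤ) ^ (k * (k + 1))) =
      PowerSeries.coeff n (∏ k ∈ Finset.range (n + 1),
        (1 + (PowerSeries.X : PowerSeries ℤ) ^ (2 * (k + 1))) * (1 - (PowerSeries.X : PowerSeries ℤ) ^ (4 * (k + 1)))) := by
  intro n
  exact JacobiAux.main_aux n
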